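/- Fix a real number a with 1/2 < a < 1. For each fixed real number L > 1 there exists a constant c > 0 (depending only on L and a) such that for every real t ≥ 0, every s ∈ [0,t] and every integer j ≥ 0, one has Σ_{k ∈ D_j^3(t)} √(log(3 + j + |k|)) / (3 + |2^j s − k|)^L ≤ c (1 + j) 2^{−j(L−1)(1−a)} √(log(3 + t)). -/

import Mathlib

lemma aux_sqrt_add {a b : ℝ} (ha : 0 ≤ a) (hb : 0 ≤ b) :
    Real.sqrt (a + b) ≤ Real.sqrt a + Real.sqrt b := by
  rw [Real.sqrt_le_iff]
  constructor
  · positivity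
  · have h1 := Real.sq_sqrt ha
    have h2 := Real.sq_sqrt hb
    nlinarith [Real.sqrt_nonneg a, Real.sqrt_nonneg b]

lemma aux_one_le_log_three : (1:ℝ) ≤ Real.log 3 := by
  rw [Real.le_log_iff_exp_le (by norm_num)]
  exact le_of_lt (lt_of_lt_of_le Real.exp_one_lt_d9 (by norm_num))

lemma aux_log_le {v : ℝ} (ε : ℝ) (hv : 1 ≤ v) (hε : 0 < ε) :
    Real.log v ≤ v ^ ε / ε := by
  have hv0 : (0:ℝ) < v := by linarith
  have h := Real.log_le_sub_one_of_pos (show (0:ℝ) < v ^ ε by positivity)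
  rw [Real.log_rpow hv0] at h
  rw [le_div_iff₀ hε]
  nlinarith

lemma aux_step (p : ℝ) (hp : 1 < p) (y : ℝ) (hy : 1 ≤ y) :
    (p - 1) * (y + 1) ^ (-p) ≤ y ^ (1 - p) - (y + 1) ^ (1 - p) := by
  have hy0 : (0:ℝ) < y := by linarith
  obtain ⟨ξ, hξ, hslope⟩ := exists_hasDerivAt_eq_slope (fun z : ℝ => z ^ (1 - p))
    (fun z : ℝ => (1 - p) * z ^ (1 - p - 1)) (show y < y + 1 by linarith)
    (ContinuousOn.rpow_const continuousOn_id
      (fun z hz => Or.inl (fun h0 => by rw [h0] at hz; exact absurd hz.1 (by linarith))))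
    (fun z hz => Real.hasDerivAt_rpow_const (Or.inl (by rintro rfl; exact absurd hz.1 (by linarith))))
  have hξ1 : y < ξ := hξ.1
  have hξ2 : ξ < y + 1 := hξ.2
  have hξ0 : (0:ℝ) < ξ := by linarith
  rw [show y + 1 - y = (1:ℝ) by ring, div_one] at hslope
  have hkey : y ^ (1 - p) - (y + 1) ^ (1 - p) = (p - 1) * ξ ^ (-p) := by
    have : (1 - p) * ξ ^ (1 - p - 1) = (y + 1) ^ (1 - p) - y ^ (1 - p) := hslope
    rw [show (1:ℝ) - p - 1 = -p by ring] at this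
    linarith
  rw [hkey]
  have : (y + 1) ^ (-p) ≤ ξ ^ (-p) :=
    Real.rpow_le_rpow_of_nonpos hξ0 (by linarith) (by linarith)
  nlinarith

lemma aux_range_sum (p : ℝ) (hp : 1 < p) (c : ℝ) (hc : 1 ≤ c) (N : ℕ) :
    ∑ n ∈ Finset.range N, (3 + c + (n:ℝ)) ^ (-p) ≤ (2 + c) ^ (1 - p) / (p - 1) := by
  have hp0 : (0:ℝ) < p - 1 := by linarith
  have key : ∀ n ∈ Finset.range N, (3 + c + (n:ℝ)) ^ (-p) ≤
      ((fun n : ℕ => (2 + c + (n:ℝ)) ^ (1 - p)) n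
        - (fun n : ℕ => (2 + c + (n:ℝ)) ^ (1 - p)) (n + 1)) / (p - 1) := by
    intro n _
    have h := aux_step p hp (2 + c + (n:ℝ)) (by push_cast; linarith [Nat.cast_nonneg (α := ℝ) n])
    rw [le_div_iff₀ hp0]
    simp only
    push_cast
    calc (3 + c + (n:ℝ)) ^ (-p) * (p - 1) = (p - 1) * ((2 + c + (n:ℝ)) + 1) ^ (-p) := by
          rw [show (3:ℝ) + c + n = 2 + c + n + 1 by ring]; ring
      _ ≤ (2 + c + (n:ℝ)) ^ (1 - p) - (2 + c + (n:ℝ) + 1) ^ (1 - p) := h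
      _ = (2 + c + (n:ℝ)) ^ (1 - p) - (2 + c + ((n:ℝ) + 1)) ^ (1 - p) := by ring_nf
  calc ∑ n ∈ Finset.range N, (3 + c + (n:ℝ)) ^ (-p)
      ≤ ∑ n ∈ Finset.range N, ((fun n : ℕ => (2 + c + (n:ℝ)) ^ (1 - p)) n
          - (fun n : ℕ => (2 + c + (n:ℝ)) ^ (1 - p)) (n + 1)) / (p - 1) :=
        Finset.sum_le_sum key
    _ = (∑ n ∈ Finset.range N, ((fun n : ℕ => (2 + c + (n:ℝ)) ^ (1 - p)) n
          - (fun n : ℕ => (2 + c + (n:ℝ)) ^ (1 - p)) (n + 1))) / (p - 1) := by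
        rw [Finset.sum_div]
    _ = ((2 + c + ((0:ℕ):ℝ)) ^ (1 - p) - (2 + c + ((N:ℕ):ℝ)) ^ (1 - p)) / (p - 1) := by
        rw [Finset.sum_range_sub' (fun n : ℕ => (2 + c + (n:ℝ)) ^ (1 - p)) N]
    _ ≤ (2 + c) ^ (1 - p) / (p - 1) := by
        have hB : (0:ℝ) ≤ (2 + c + ((N:ℕ):ℝ)) ^ (1 - p) := Real.rpow_nonneg (by positivity) _
        gcongr
        simp only [Nat.cast_zero, add_zero]
        linarith

lemma aux_nat_sum (p : ℝ) (hp : 1 < p) (c : ℝ) (hc : 1 ≤ c) (G : Finset ℕ) :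
    ∑ n ∈ G, (3 + c + (n:ℝ)) ^ (-p) ≤ (2 + c) ^ (1 - p) / (p - 1) := by
  refine le_trans (Finset.sum_le_sum_of_subset_of_nonneg
    (show G ⊆ Finset.range (G.sup id + 1) from fun n hn => Finset.mem_range.2
      (Nat.lt_succ_of_le (Finset.le_sup (f := id) hn)))
    (fun i _ _ => Real.rpow_nonneg (by positivity) _)) ?_
  exact aux_range_sum p hp c hc _

lemma aux_int_sum (p : ℝ) (hp : 1 < p) (c : ℝ) (hc : 1 ≤ c) (x : ℝ) (F : Finset ℤ)
    (g : ℤ → ℕ) (hg : ∀ k ∈ F, ∀ l ∈ F, g k = g l → k = l)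
    (h : ∀ k ∈ F, c + g k ≤ |x - k|) :
    ∑ k ∈ F, (3 + |x - (k:ℝ)|) ^ (-p) ≤ (2 + c) ^ (1 - p) / (p - 1) := by
  have h1 : ∀ k ∈ F, (3 + |x - (k:ℝ)|) ^ (-p) ≤ (3 + c + (g k : ℝ)) ^ (-p) := by
    intro k hk
    have hgk : (0:ℝ) ≤ (g k : ℝ) := Nat.cast_nonneg _
    exact Real.rpow_le_rpow_of_nonpos (by positivity)
      (by have := h k hk; linarith) (by linarith)
  calc ∑ k ∈ F, (3 + |x - (k:ℝ)|) ^ (-p) ≤ ∑ k ∈ F, (3 + c + (g k : ℝ)) ^ (-p) :=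
        Finset.sum_le_sum h1
    _ = ∑ n ∈ F.image g, (3 + c + (n:ℝ)) ^ (-p) :=
        (Finset.sum_image (f := fun n : ℕ => (3 + c + (n:ℝ)) ^ (-p)) hg).symm
    _ ≤ (2 + c) ^ (1 - p) / (p - 1) := aux_nat_sum p hp c hc _

lemma aux_count (p : ℝ) (hp : 1 < p) (c : ℝ) (hc : 1 ≤ c) (x : ℝ) (F : Finset ℤ)
    (hF : ∀ k ∈ F, c ≤ |x - (k:ℝ)|) :
    ∑ k ∈ F, (3 + |x - (k:ℝ)|) ^ (-p) ≤ 2 * ((2 + c) ^ (1 - p) / (p - 1)) := by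
  classical
  rw [← Finset.sum_filter_add_sum_filter_not F (fun k : ℤ => x ≤ (k:ℝ)), two_mul]
  apply add_le_add
  · -- k ≥ x
    set m : ℤ := ⌈x + c⌉ with hm
    have hmx : x + c ≤ (m:ℝ) := Int.le_ceil _
    apply aux_int_sum p hp c hc x _ (fun k => (k - m).toNat)
    · intro k hk l hl hkl
      rw [Finset.mem_filter] at hk hl
      have hk2 : m ≤ k := by
        rw [hm, Int.ceil_le]
        have := hF k hk.1
        rw [abs_of_nonpos (by linarith [hk.2] : x - (k:ℝ) ≤ 0)] at this
        linarith
      have hl2 : m ≤ l := by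
        rw [hm, Int.ceil_le]
        have := hF l hl.1
        rw [abs_of_nonpos (by linarith [hl.2] : x - (l:ℝ) ≤ 0)] at this
        linarith
      omega
    · intro k hk
      rw [Finset.mem_filter] at hk
      have hd := hF k hk.1
      rw [abs_of_nonpos (by linarith [hk.2] : x - (k:ℝ) ≤ 0)] at hd ⊢
      have hk2 : m ≤ k := by rw [hm, Int.ceil_le]; linarith
      have : ((k - m).toNat : ℝ) = (k:ℝ) - (m:ℝ) := by
        exact_mod_cast Int.toNat_of_nonneg (show (0:ℤ) ≤ k - m by omega)
      rw [this]
      linarith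
  · -- k < x
    set m : ℤ := ⌊x - c⌋ with hm
    have hmx : (m:ℝ) ≤ x - c := Int.floor_le _
    apply aux_int_sum p hp c hc x _ (fun k => (m - k).toNat)
    · intro k hk l hl hkl
      rw [Finset.mem_filter] at hk hl
      push_neg at hk hl
      have hk2 : k ≤ m := by
        rw [hm, Int.le_floor]
        have := hF k hk.1
        rw [abs_of_nonneg (by linarith [hk.2] : (0:ℝ) ≤ x - (k:ℝ))] at this
        linarith
      have hl2 : l ≤ m := by
        rw [hm, Int.le_floor]
        have := hF l hl.1
        rw [abs_of_nonneg (by linarith [hl.2] : (0:ℝ) ≤ x - (l:ℝ))] at this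
        linarith
      omega
    · intro k hk
      rw [Finset.mem_filter] at hk
      push_neg at hk
      have hd := hF k hk.1
      rw [abs_of_nonneg (by linarith [hk.2] : (0:ℝ) ≤ x - (k:ℝ))] at hd ⊢
      have hk2 : k ≤ m := by rw [hm, Int.le_floor]; linarith
      have : ((m - k).toNat : ℝ) = (m:ℝ) - (k:ℝ) := by
        exact_mod_cast Int.toNat_of_nonneg (show (0:ℤ) ≤ m - k by omega)
      rw [this]
      linarith

lemma aux_sqrtlog (L : ℝ) (hL : 1 < L) (c0 u : ℝ) (hc0 : 1 ≤ c0) (hu : c0 ≤ u) :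
    Real.sqrt (Real.log (3 + u)) ≤ Real.sqrt (Real.log (3 + c0)) +
      (3 + u) ^ ((L - 1) / 2) / ((3 + c0) ^ ((L - 1) / 2) * Real.sqrt (L - 1)) := by
  have hL0 : (0:ℝ) < L - 1 := by linarith
  have hc0pos : (0:ℝ) < 3 + c0 := by linarith
  have hupos : (0:ℝ) < 3 + u := by linarith
  have hd0 : 0 ≤ Real.log (3 + u) - Real.log (3 + c0) :=
    sub_nonneg.2 (Real.log_le_log hc0pos (by linarith))
  have h1 : Real.sqrt (Real.log (3 + u)) ≤ Real.sqrt (Real.log (3 + c0)) +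
      Real.sqrt (Real.log (3 + u) - Real.log (3 + c0)) := by
    have h := aux_sqrt_add (Real.log_nonneg (by linarith : (1:ℝ) ≤ 3 + c0)) hd0
    rw [show Real.log (3 + c0) + (Real.log (3 + u) - Real.log (3 + c0))
        = Real.log (3 + u) by ring] at h
    exact h
  refine h1.trans (add_le_add_right ?_ _)
  have hv1 : 1 ≤ (3 + u) / (3 + c0) := (one_le_div hc0pos).2 (by linarith)
  have hv0 : (0:ℝ) < (3 + u) / (3 + c0) := by linarith
  have hdiff : Real.log (3 + u) - Real.log (3 + c0) = Real.log ((3 + u) / (3 + c0)) := by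
    rw [Real.log_div (ne_of_gt hupos) (ne_of_gt hc0pos)]
  rw [hdiff]
  have h2 : Real.sqrt (Real.log ((3 + u) / (3 + c0)))
      ≤ Real.sqrt (((3 + u) / (3 + c0)) ^ (L - 1) / (L - 1)) :=
    Real.sqrt_le_sqrt (aux_log_le (L - 1) hv1 hL0)
  refine h2.trans (le_of_eq ?_)
  rw [Real.sqrt_div (by positivity) _]
  have h3 : Real.sqrt (((3 + u) / (3 + c0)) ^ (L - 1)) = ((3 + u) / (3 + c0)) ^ ((L - 1) / 2) := by
    rw [Real.sqrt_eq_rpow, ← Real.rpow_mul (le_of_lt hv0)]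
    congr 1; ring
  rw [h3, Real.div_rpow (by linarith) (by linarith), div_div]

lemma aux_term (L : ℝ) (hL : 1 < L) (c0 : ℝ) (hc0 : 1 ≤ c0) (E N u : ℝ) (hu : c0 ≤ u)
    (hN : Real.sqrt N ≤ E + Real.sqrt (Real.log (3 + u))) :
    Real.sqrt N / (3 + u) ^ L ≤ (E + Real.sqrt (Real.log (3 + c0))) * (3 + u) ^ (-L)
      + (1 / ((3 + c0) ^ ((L - 1) / 2) * Real.sqrt (L - 1))) * (3 + u) ^ (-((L + 1) / 2)) := by
  have hupos : (0:ℝ) < 3 + u := by linarith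
  have hinv : Real.sqrt N / (3 + u) ^ L = Real.sqrt N * (3 + u) ^ (-L) := by
    rw [Real.rpow_neg (le_of_lt hupos), div_eq_mul_inv]
  rw [hinv]
  have hnum : Real.sqrt N ≤ (E + Real.sqrt (Real.log (3 + c0))) +
      (3 + u) ^ ((L - 1) / 2) / ((3 + c0) ^ ((L - 1) / 2) * Real.sqrt (L - 1)) := by
    have h := aux_sqrtlog L hL c0 u hc0 hu
    linarith
  have hmul := mul_le_mul_of_nonneg_right hnum
    (le_of_lt (Real.rpow_pos_of_pos hupos (-L)))
  refine hmul.trans ?_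
  rw [add_mul]
  apply add_le_add_right
  apply le_of_eq
  have hpow : (3 + u) ^ ((L - 1) / 2) * (3 + u) ^ (-L) = (3 + u) ^ (-((L + 1) / 2)) := by
    rw [← Real.rpow_add hupos]; congr 1; ring
  calc (3 + u) ^ ((L - 1) / 2) / ((3 + c0) ^ ((L - 1) / 2) * Real.sqrt (L - 1)) * (3 + u) ^ (-L)
      = (1 / ((3 + c0) ^ ((L - 1) / 2) * Real.sqrt (L - 1)))
          * ((3 + u) ^ ((L - 1) / 2) * (3 + u) ^ (-L)) := by ring
    _ = _ := by rw [hpow]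

lemma aux_num (j : ℕ) (t x u kabs : ℝ) (ht : 0 ≤ t) (hx0 : 0 ≤ x)
    (hxt : x ≤ (2:ℝ) ^ (j:ℤ) * t) (hu1 : 1 ≤ u) (hk : kabs ≤ u + x) (hk0 : 0 ≤ kabs) :
    Real.sqrt (Real.log (3 + (j:ℝ) + kabs)) ≤
      (Real.sqrt (Real.log (3 + (j:ℝ))) + Real.sqrt ((j:ℝ) * Real.log 2)
        + Real.sqrt (Real.log (3 + t))) + Real.sqrt (Real.log (3 + u)) := by
  have hj0 : (0:ℝ) ≤ (j:ℝ) := Nat.cast_nonneg j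
  have h2j1 : (1:ℝ) ≤ (2:ℝ) ^ (j:ℤ) := by
    rw [zpow_natCast]; exact one_le_pow₀ (by norm_num)
  have hT0 : (0:ℝ) ≤ (2:ℝ) ^ (j:ℤ) * t := le_trans hx0 hxt
  have hBpos : (0:ℝ) < 3 + (2:ℝ) ^ (j:ℤ) * t := by linarith
  have hstep : 3 + (j:ℝ) + kabs ≤ (3 + (j:ℝ)) * ((3 + (2:ℝ) ^ (j:ℤ) * t) * (3 + u)) := by
    nlinarith [mul_nonneg hj0 hT0, mul_nonneg hj0 (by linarith : (0:ℝ) ≤ u),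
      mul_nonneg hT0 (by linarith : (0:ℝ) ≤ u), mul_nonneg (mul_nonneg hj0 hT0) (by linarith : (0:ℝ) ≤ u)]
  have hlog1 : Real.log (3 + (j:ℝ) + kabs) ≤
      Real.log (3 + (j:ℝ)) + (Real.log (3 + (2:ℝ) ^ (j:ℤ) * t) + Real.log (3 + u)) := by
    calc Real.log (3 + (j:ℝ) + kabs)
        ≤ Real.log ((3 + (j:ℝ)) * ((3 + (2:ℝ) ^ (j:ℤ) * t) * (3 + u))) :=
          Real.log_le_log (by linarith) hstep
      _ = _ := by
          rw [Real.log_mul (by positivity) (by positivity), Real.log_mul (ne_of_gt hBpos)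
            (ne_of_gt (by linarith : (0:ℝ) < 3 + u))]
  have hlog2 : Real.log (3 + (2:ℝ) ^ (j:ℤ) * t) ≤ (j:ℝ) * Real.log 2 + Real.log (3 + t) := by
    have h1 : 3 + (2:ℝ) ^ (j:ℤ) * t ≤ (2:ℝ) ^ (j:ℤ) * (3 + t) := by nlinarith
    calc Real.log (3 + (2:ℝ) ^ (j:ℤ) * t) ≤ Real.log ((2:ℝ) ^ (j:ℤ) * (3 + t)) :=
          Real.log_le_log hBpos h1
      _ = (j:ℝ) * Real.log 2 + Real.log (3 + t) := by
          rw [Real.log_mul (by positivity) (ne_of_gt (by linarith : (0:ℝ) < 3 + t)),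
            Real.log_zpow]
          push_cast; ring
  have hlog2' : (0:ℝ) ≤ (j:ℝ) * Real.log 2 :=
    mul_nonneg hj0 (Real.log_nonneg one_le_two)
  have hlogt : (0:ℝ) ≤ Real.log (3 + t) := Real.log_nonneg (by linarith)
  have hlogj : (0:ℝ) ≤ Real.log (3 + (j:ℝ)) := Real.log_nonneg (by linarith)
  have hlogu : (0:ℝ) ≤ Real.log (3 + u) := Real.log_nonneg (by linarith)
  calc Real.sqrt (Real.log (3 + (j:ℝ) + kabs))
      ≤ Real.sqrt ((Real.log (3 + (j:ℝ)) + ((j:ℝ) * Real.log 2 + Real.log (3 + t)))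
          + Real.log (3 + u)) := Real.sqrt_le_sqrt (by linarith)
    _ ≤ Real.sqrt (Real.log (3 + (j:ℝ)) + ((j:ℝ) * Real.log 2 + Real.log (3 + t)))
          + Real.sqrt (Real.log (3 + u)) := aux_sqrt_add (by linarith) hlogu
    _ ≤ (Real.sqrt (Real.log (3 + (j:ℝ))) + (Real.sqrt ((j:ℝ) * Real.log 2)
          + Real.sqrt (Real.log (3 + t)))) + Real.sqrt (Real.log (3 + u)) := by
        apply add_le_add_left
        refine le_trans (aux_sqrt_add hlogj (by linarith)) ?_
        exact add_le_add_right (aux_sqrt_add hlog2' hlogt) _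
    _ = _ := by ring

lemma aux_Etot (j : ℕ) (t : ℝ) (ht : 0 ≤ t) (c0 : ℝ) (hc0 : 1 ≤ c0)
    (hc0a : c0 ≤ (2:ℝ) ^ ((j:ℝ))) :
    Real.sqrt (Real.log (3 + (j:ℝ))) + Real.sqrt ((j:ℝ) * Real.log 2)
      + Real.sqrt (Real.log (3 + t)) + Real.sqrt (Real.log (3 + c0))
      ≤ 7 * ((1 + (j:ℝ)) * Real.sqrt (Real.log (3 + t))) := by
  have hj0 : (0:ℝ) ≤ (j:ℝ) := Nat.cast_nonneg j
  have hS1 : 1 ≤ Real.sqrt (Real.log (3 + t)) := by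
    rw [Real.one_le_sqrt]
    calc (1:ℝ) ≤ Real.log 3 := aux_one_le_log_three
      _ ≤ Real.log (3 + t) := Real.log_le_log (by norm_num) (by linarith)
  have hlog2le : Real.log 2 ≤ 1 := le_trans Real.log_two_lt_d9.le (by norm_num)
  have hA1 : Real.sqrt (Real.log (3 + (j:ℝ))) ≤ 2 * (1 + (j:ℝ)) := by
    rw [Real.sqrt_le_iff]
    constructor
    · linarith
    · have := Real.log_le_sub_one_of_pos (show (0:ℝ) < 3 + (j:ℝ) by linarith)
      nlinarith
  have hA2 : Real.sqrt ((j:ℝ) * Real.log 2) ≤ 1 + (j:ℝ) := by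
    rw [Real.sqrt_le_iff]
    constructor
    · linarith
    · have h2 : (0:ℝ) ≤ Real.log 2 := Real.log_nonneg one_le_two
      nlinarith
  have hA3 : Real.sqrt (Real.log (3 + c0)) ≤ 2 * (1 + (j:ℝ)) := by
    have h2jr1 : (1:ℝ) ≤ (2:ℝ) ^ ((j:ℝ)) := Real.one_le_rpow one_le_two hj0
    have h4 : (2:ℝ) ^ ((j:ℝ) + 2) = (2:ℝ) ^ ((j:ℝ)) * 4 := by
      rw [Real.rpow_add (by norm_num : (0:ℝ) < 2)]
      congr 1
      rw [show ((2:ℝ):ℝ) = ((2:ℕ):ℝ) by norm_num, Real.rpow_natCast]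
      norm_num
    have hle : 3 + c0 ≤ (2:ℝ) ^ ((j:ℝ) + 2) := by rw [h4]; linarith
    have hlog : Real.log (3 + c0) ≤ ((j:ℝ) + 2) * Real.log 2 := by
      calc Real.log (3 + c0) ≤ Real.log ((2:ℝ) ^ ((j:ℝ) + 2)) :=
            Real.log_le_log (by linarith) hle
        _ = ((j:ℝ) + 2) * Real.log 2 := Real.log_rpow (by norm_num) _
    rw [Real.sqrt_le_iff]
    constructor
    · linarith
    · nlinarith
  nlinarith [mul_nonneg (show (0:ℝ) ≤ 1 + (j:ℝ) by linarith)
    (show (0:ℝ) ≤ Real.sqrt (Real.log (3 + t)) - 1 by linarith)]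



/-- The interval `B_{j,k} = [k 2^{-j} - 2^{-ja}, k 2^{-j} + 2^{-ja}]`. -/
noncomputable def intervalB (a : ℝ) (j : ℕ) (k : ℤ) : Set ℝ :=
  Set.Icc ((k : ℝ) * (2 : ℝ) ^ (-(j : ℤ)) - (2 : ℝ) ^ (-(j : ℝ) * a))
    ((k : ℝ) * (2 : ℝ) ^ (-(j : ℤ)) + (2 : ℝ) ^ (-(j : ℝ) * a))

/-- The set `D_j^3(t)` of indices `k` whose interval `B_{j,k}` does not meet `[0,t]`. -/
noncomputable def setD3 (a : ℝ) (j : ℕ) (t : ℝ) : Set ℤ :=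
  {k : ℤ | intervalB a j k ∩ Set.Icc 0 t = ∅}


lemma aux_dist (a : ℝ) (j : ℕ) (t : ℝ) (ht : 0 ≤ t)
    (s : ℝ) (hs0 : 0 ≤ s) (hst : s ≤ t) (k : ℤ) (hk : k ∈ setD3 a j t) :
    (2:ℝ) ^ ((j:ℝ) * (1 - a)) ≤ |(2:ℝ) ^ (j:ℤ) * s - (k:ℝ)| := by
  have hk' : intervalB a j k ∩ Set.Icc 0 t = ∅ := hk
  have h2jpos : (0:ℝ) < (2:ℝ) ^ (j:ℤ) := by positivity
  have hrw2j : (2:ℝ) ^ (j:ℤ) = (2:ℝ) ^ ((j:ℝ)) := by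
    rw [zpow_natCast, ← Real.rpow_natCast]
  have hprod : (2:ℝ) ^ (j:ℤ) * (2:ℝ) ^ (-(j:ℝ) * a) = (2:ℝ) ^ ((j:ℝ) * (1 - a)) := by
    rw [hrw2j, ← Real.rpow_add (by norm_num : (0:ℝ) < 2)]
    congr 1; ring
  have hinv : (2:ℝ) ^ (j:ℤ) * (2:ℝ) ^ (-(j:ℤ)) = 1 := by
    rw [← zpow_add₀ (two_ne_zero : (2:ℝ) ≠ 0)]; simp
  have hx0 : (0:ℝ) ≤ (2:ℝ) ^ (j:ℤ) * s := mul_nonneg h2jpos.le hs0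
  have hxt : (2:ℝ) ^ (j:ℤ) * s ≤ (2:ℝ) ^ (j:ℤ) * t :=
    mul_le_mul_of_nonneg_left hst h2jpos.le
  have hcases : (k:ℝ) * (2:ℝ) ^ (-(j:ℤ)) + (2:ℝ) ^ (-(j:ℝ) * a) < 0 ∨
      t < (k:ℝ) * (2:ℝ) ^ (-(j:ℤ)) - (2:ℝ) ^ (-(j:ℝ) * a) := by
    by_contra hcon
    push_neg at hcon
    obtain ⟨h1, h2⟩ := hcon
    have hpa : (0:ℝ) < (2:ℝ) ^ (-(j:ℝ) * a) := by positivity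
    have hlohi : (k:ℝ) * (2:ℝ) ^ (-(j:ℤ)) - (2:ℝ) ^ (-(j:ℝ) * a)
        ≤ (k:ℝ) * (2:ℝ) ^ (-(j:ℤ)) + (2:ℝ) ^ (-(j:ℝ) * a) := by linarith
    have hmem : max 0 ((k:ℝ) * (2:ℝ) ^ (-(j:ℤ)) - (2:ℝ) ^ (-(j:ℝ) * a))
        ∈ intervalB a j k ∩ Set.Icc 0 t := by
      constructor
      · exact ⟨le_max_right _ _, max_le h1 hlohi⟩
      · exact ⟨le_max_left _ _, max_le ht h2⟩
    rw [hk'] at hmem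
    exact hmem
  rcases hcases with h | h
  · have e1 : (2:ℝ) ^ (j:ℤ) * ((k:ℝ) * (2:ℝ) ^ (-(j:ℤ)) + (2:ℝ) ^ (-(j:ℝ) * a))
        = (k:ℝ) + (2:ℝ) ^ ((j:ℝ) * (1 - a)) := by
      calc (2:ℝ) ^ (j:ℤ) * ((k:ℝ) * (2:ℝ) ^ (-(j:ℤ)) + (2:ℝ) ^ (-(j:ℝ) * a))
          = (k:ℝ) * ((2:ℝ) ^ (j:ℤ) * (2:ℝ) ^ (-(j:ℤ)))
            + (2:ℝ) ^ (j:ℤ) * (2:ℝ) ^ (-(j:ℝ) * a) := by ring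
        _ = _ := by rw [hinv, hprod]; ring
    have hkc : (k:ℝ) + (2:ℝ) ^ ((j:ℝ) * (1 - a)) < 0 := by
      rw [← e1]
      exact mul_neg_of_pos_of_neg h2jpos h
    have hpa : (0:ℝ) < (2:ℝ) ^ ((j:ℝ) * (1 - a)) := by positivity
    rw [abs_of_nonneg (by linarith : (0:ℝ) ≤ (2:ℝ) ^ (j:ℤ) * s - (k:ℝ))]
    linarith
  · have e2 : (2:ℝ) ^ (j:ℤ) * ((k:ℝ) * (2:ℝ) ^ (-(j:ℤ)) - (2:ℝ) ^ (-(j:ℝ) * a))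
        = (k:ℝ) - (2:ℝ) ^ ((j:ℝ) * (1 - a)) := by
      calc (2:ℝ) ^ (j:ℤ) * ((k:ℝ) * (2:ℝ) ^ (-(j:ℤ)) - (2:ℝ) ^ (-(j:ℝ) * a))
          = (k:ℝ) * ((2:ℝ) ^ (j:ℤ) * (2:ℝ) ^ (-(j:ℤ)))
            - (2:ℝ) ^ (j:ℤ) * (2:ℝ) ^ (-(j:ℝ) * a) := by ring
        _ = _ := by rw [hinv, hprod]; ring
    have hkc : (2:ℝ) ^ (j:ℤ) * t < (k:ℝ) - (2:ℝ) ^ ((j:ℝ) * (1 - a)) := by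
      rw [← e2]
      exact (mul_lt_mul_iff_right₀ h2jpos).2 h
    have hpa : (0:ℝ) < (2:ℝ) ^ ((j:ℝ) * (1 - a)) := by positivity
    rw [abs_of_nonpos (by linarith : (2:ℝ) ^ (j:ℤ) * s - (k:ℝ) ≤ 0)]
    linarith

set_option maxHeartbeats 1000000 in
theorem tsum_over_D3_bound (a : ℝ) (ha1 : 1 / 2 < a) (ha2 : a < 1)
    (L : ℝ) (hL : 1 < L) :
    ∃ c : ℝ, 0 < c ∧ ∀ (t : ℝ), 0 ≤ t → ∀ s ∈ Set.Icc (0 : ℝ) t, ∀ j : ℕ,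
      (∑' k : setD3 a j t,
          Real.sqrt (Real.log (3 + (j : ℝ) + |((k : ℤ) : ℝ)|)) /
            (3 + |(2 : ℝ) ^ (j : ℤ) * s - ((k : ℤ) : ℝ)|) ^ L)
        ≤ c * (1 + (j : ℝ)) * (2 : ℝ) ^ (-(j : ℝ) * (L - 1) * (1 - a)) *
            Real.sqrt (Real.log (3 + t)) := by
  classical
  have hL0 : (0:ℝ) < L - 1 := by linarith
  have hsL : (0:ℝ) < Real.sqrt (L - 1) := Real.sqrt_pos.2 hL0
  have hcval : (0:ℝ) < 14 / (L - 1) + 4 / ((L - 1) * Real.sqrt (L - 1)) :=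
    add_pos (div_pos (by norm_num) hL0) (div_pos (by norm_num) (mul_pos hL0 hsL))
  refine ⟨14 / (L - 1) + 4 / ((L - 1) * Real.sqrt (L - 1)), hcval, ?_⟩
  intro t ht s hs j
  have hj0 : (0:ℝ) ≤ (j:ℝ) := Nat.cast_nonneg j
  set S : ℝ := Real.sqrt (Real.log (3 + t)) with hSdef
  have hS1 : 1 ≤ S := by
    rw [hSdef, Real.one_le_sqrt]
    calc (1:ℝ) ≤ Real.log 3 := aux_one_le_log_three
      _ ≤ Real.log (3 + t) := Real.log_le_log (by norm_num) (by linarith)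
  set c0 : ℝ := (2:ℝ) ^ ((j:ℝ) * (1 - a)) with hc0def
  have hc0one : (1:ℝ) ≤ c0 := Real.one_le_rpow one_le_two (mul_nonneg hj0 (by linarith))
  have hc0pos : (0:ℝ) < c0 := by positivity
  set x : ℝ := (2:ℝ) ^ (j:ℤ) * s with hxdef
  have h2jp : (0:ℝ) < (2:ℝ) ^ (j:ℤ) := by positivity
  have hx0 : 0 ≤ x := mul_nonneg h2jp.le hs.1
  have hxt : x ≤ (2:ℝ) ^ (j:ℤ) * t := mul_le_mul_of_nonneg_left hs.2 h2jp.le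
  have hRHS0 : 0 ≤ (14 / (L - 1) + 4 / ((L - 1) * Real.sqrt (L - 1))) * (1 + (j:ℝ))
      * (2:ℝ) ^ (-(j:ℝ) * (L - 1) * (1 - a)) * S :=
    mul_nonneg (mul_nonneg (mul_nonneg hcval.le (by linarith))
      (Real.rpow_nonneg (by norm_num) _)) (Real.sqrt_nonneg _)
  apply tsum_le_of_sum_le' hRHS0
  intro Fs
  set F : Finset ℤ := Fs.image (fun i : (setD3 a j t) => (i : ℤ)) with hFdef
  have hFD : ∀ k ∈ F, c0 ≤ |x - (k:ℝ)| := by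
    intro k hkF
    rw [hFdef, Finset.mem_image] at hkF
    obtain ⟨i, _, rfl⟩ := hkF
    exact aux_dist a j t ht s hs.1 hs.2 i i.2
  have hsum_eq : (∑ i ∈ Fs, Real.sqrt (Real.log (3 + (j:ℝ) + |((i:ℤ):ℝ)|))
        / (3 + |x - ((i:ℤ):ℝ)|) ^ L)
      = ∑ k ∈ F, Real.sqrt (Real.log (3 + (j:ℝ) + |(k:ℝ)|)) / (3 + |x - (k:ℝ)|) ^ L := by
    rw [hFdef]
    exact (Finset.sum_image
      (f := fun k : ℤ => Real.sqrt (Real.log (3 + (j:ℝ) + |(k:ℝ)|)) / (3 + |x - (k:ℝ)|) ^ L)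
      (g := fun i : (setD3 a j t) => (i : ℤ))
      (fun i _ l _ h => Subtype.ext h)).symm
  rw [hsum_eq]
  set E : ℝ := Real.sqrt (Real.log (3 + (j:ℝ))) + Real.sqrt ((j:ℝ) * Real.log 2) + S
    with hEdef
  have hE0 : 0 ≤ E := by
    rw [hEdef]
    have := Real.sqrt_nonneg (Real.log (3 + (j:ℝ)))
    have := Real.sqrt_nonneg ((j:ℝ) * Real.log 2)
    have := Real.sqrt_nonneg (Real.log (3 + t))
    linarith
  have hterm : ∀ k ∈ F, Real.sqrt (Real.log (3 + (j:ℝ) + |(k:ℝ)|)) / (3 + |x - (k:ℝ)|) ^ L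
      ≤ (E + Real.sqrt (Real.log (3 + c0))) * (3 + |x - (k:ℝ)|) ^ (-L)
        + (1 / ((3 + c0) ^ ((L - 1) / 2) * Real.sqrt (L - 1)))
          * (3 + |x - (k:ℝ)|) ^ (-((L + 1) / 2)) := by
    intro k hkF
    have hu := hFD k hkF
    have hu1 : 1 ≤ |x - (k:ℝ)| := le_trans hc0one hu
    apply aux_term L hL c0 hc0one E _ _ hu
    have habs : |(k:ℝ)| ≤ |x - (k:ℝ)| + x := by
      calc |(k:ℝ)| = |((k:ℝ) - x) + x| := by ring_nf
        _ ≤ |(k:ℝ) - x| + |x| := abs_add_le _ _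
        _ = |x - (k:ℝ)| + x := by rw [abs_sub_comm, abs_of_nonneg hx0]
    rw [hEdef, hSdef]
    exact aux_num j t x _ _ ht hx0 hxt hu1 habs (abs_nonneg _)
  have hDpos : (0:ℝ) < (3 + c0) ^ ((L - 1) / 2) * Real.sqrt (L - 1) :=
    mul_pos (Real.rpow_pos_of_pos (by linarith) _) hsL
  have hc0a : c0 ≤ (2:ℝ) ^ ((j:ℝ)) := by
    rw [hc0def]
    apply Real.rpow_le_rpow_of_exponent_le one_le_two
    nlinarith
  have hP1 : (2 + c0) ^ (1 - L) ≤ c0 ^ (1 - L) :=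
    Real.rpow_le_rpow_of_nonpos hc0pos (by linarith) (by linarith)
  have hP3 : (2 + c0) ^ (1 - (L + 1) / 2) ≤ c0 ^ (1 - (L + 1) / 2) :=
    Real.rpow_le_rpow_of_nonpos hc0pos (by linarith) (by linarith)
  have hZpos : (0:ℝ) < c0 ^ (1 - L) := Real.rpow_pos_of_pos hc0pos _
  have h1jS : 1 ≤ (1 + (j:ℝ)) * S := by nlinarith
  calc ∑ k ∈ F, Real.sqrt (Real.log (3 + (j:ℝ) + |(k:ℝ)|)) / (3 + |x - (k:ℝ)|) ^ L
      ≤ ∑ k ∈ F, ((E + Real.sqrt (Real.log (3 + c0))) * (3 + |x - (k:ℝ)|) ^ (-L)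
          + (1 / ((3 + c0) ^ ((L - 1) / 2) * Real.sqrt (L - 1)))
            * (3 + |x - (k:ℝ)|) ^ (-((L + 1) / 2))) := Finset.sum_le_sum hterm
    _ = (E + Real.sqrt (Real.log (3 + c0))) * ∑ k ∈ F, (3 + |x - (k:ℝ)|) ^ (-L)
          + (1 / ((3 + c0) ^ ((L - 1) / 2) * Real.sqrt (L - 1)))
            * ∑ k ∈ F, (3 + |x - (k:ℝ)|) ^ (-((L + 1) / 2)) := by
        rw [Finset.sum_add_distrib, Finset.mul_sum, Finset.mul_sum]
    _ ≤ (E + Real.sqrt (Real.log (3 + c0))) * (2 * ((2 + c0) ^ (1 - L) / (L - 1)))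
          + (1 / ((3 + c0) ^ ((L - 1) / 2) * Real.sqrt (L - 1)))
            * (2 * ((2 + c0) ^ (1 - (L + 1) / 2) / ((L + 1) / 2 - 1))) := by
        apply add_le_add
        · exact mul_le_mul_of_nonneg_left (aux_count L hL c0 hc0one x F hFD)
            (add_nonneg hE0 (Real.sqrt_nonneg _))
        · exact mul_le_mul_of_nonneg_left
            (aux_count ((L + 1) / 2) (by linarith) c0 hc0one x F hFD)
            (by positivity)
    _ ≤ 7 * ((1 + (j:ℝ)) * S) * (2 * (c0 ^ (1 - L) / (L - 1)))
          + 4 / ((L - 1) * Real.sqrt (L - 1)) * c0 ^ (1 - L) := by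
        apply add_le_add
        · apply mul_le_mul
          · rw [hEdef, hSdef]
            exact aux_Etot j t ht c0 hc0one hc0a
          · apply mul_le_mul_of_nonneg_left ?_ (by norm_num : (0:ℝ) ≤ 2)
            rw [div_eq_mul_inv, div_eq_mul_inv]
            exact mul_le_mul_of_nonneg_right hP1 (inv_nonneg.2 (by linarith))
          · have h1 : (0:ℝ) ≤ (2 + c0) ^ (1 - L) := Real.rpow_nonneg (by linarith) _
            have h2 : (0:ℝ) ≤ (2 + c0) ^ (1 - L) / (L - 1) := div_nonneg h1 (by linarith)
            linarith
          · have h1 : (0:ℝ) ≤ (1 + (j:ℝ)) * S := by nlinarith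
            linarith
        · have hDen : (0:ℝ) < c0 ^ ((L - 1) / 2) * Real.sqrt (L - 1) :=
            mul_pos (Real.rpow_pos_of_pos hc0pos _) hsL
          have hD1 : 1 / ((3 + c0) ^ ((L - 1) / 2) * Real.sqrt (L - 1))
              ≤ 1 / (c0 ^ ((L - 1) / 2) * Real.sqrt (L - 1)) := by
            apply one_div_le_one_div_of_le hDen
            exact mul_le_mul_of_nonneg_right
              (Real.rpow_le_rpow hc0pos.le (by linarith) (by linarith)) hsL.le
          have hq2 : (0:ℝ) < (L + 1) / 2 - 1 := by linarith
          have hB2 : (0:ℝ) ≤ 2 * ((2 + c0) ^ (1 - (L + 1) / 2) / ((L + 1) / 2 - 1)) :=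
            mul_nonneg (by norm_num)
              (div_nonneg (Real.rpow_nonneg (by linarith) _) hq2.le)
          calc 1 / ((3 + c0) ^ ((L - 1) / 2) * Real.sqrt (L - 1))
                * (2 * ((2 + c0) ^ (1 - (L + 1) / 2) / ((L + 1) / 2 - 1)))
              ≤ 1 / (c0 ^ ((L - 1) / 2) * Real.sqrt (L - 1))
                * (2 * ((2 + c0) ^ (1 - (L + 1) / 2) / ((L + 1) / 2 - 1))) :=
                mul_le_mul_of_nonneg_right hD1 hB2
            _ ≤ 1 / (c0 ^ ((L - 1) / 2) * Real.sqrt (L - 1))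
                * (2 * (c0 ^ (1 - (L + 1) / 2) / ((L + 1) / 2 - 1))) := by
                apply mul_le_mul_of_nonneg_left ?_ (one_div_pos.2 hDen).le
                apply mul_le_mul_of_nonneg_left ?_ (by norm_num : (0:ℝ) ≤ 2)
                rw [div_eq_mul_inv, div_eq_mul_inv]
                exact mul_le_mul_of_nonneg_right hP3 (inv_nonneg.2 hq2.le)
            _ = 4 / ((L - 1) * Real.sqrt (L - 1)) * c0 ^ (1 - L) := by
                have hP4 : c0 ^ (1 - (L + 1) / 2) = c0 ^ (1 - L) * c0 ^ ((L - 1) / 2) := by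
                  rw [← Real.rpow_add hc0pos]; congr 1; ring
                have hr0 : c0 ^ ((L - 1) / 2) ≠ 0 :=
                  ne_of_gt (Real.rpow_pos_of_pos hc0pos _)
                have hss : Real.sqrt (L - 1) ≠ 0 := ne_of_gt hsL
                have hL1 : L - 1 ≠ 0 := ne_of_gt hL0
                rw [hP4, show (L + 1) / 2 - 1 = (L - 1) / 2 by ring]
                have hL2 : (L - 1) / 2 ≠ 0 := by
                  intro hcon; apply hL1; linarith
                field_simp
                ring
    _ ≤ (14 / (L - 1) + 4 / ((L - 1) * Real.sqrt (L - 1))) * (1 + (j:ℝ)) * c0 ^ (1 - L) * S := by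
        have e3 : 7 * ((1 + (j:ℝ)) * S) * (2 * (c0 ^ (1 - L) / (L - 1)))
            = 14 / (L - 1) * (1 + (j:ℝ)) * c0 ^ (1 - L) * S := by ring
        have h0 : 0 ≤ 4 / ((L - 1) * Real.sqrt (L - 1)) * c0 ^ (1 - L) := by positivity
        have hmono : 4 / ((L - 1) * Real.sqrt (L - 1)) * c0 ^ (1 - L)
            ≤ 4 / ((L - 1) * Real.sqrt (L - 1)) * (1 + (j:ℝ)) * c0 ^ (1 - L) * S := by
          calc 4 / ((L - 1) * Real.sqrt (L - 1)) * c0 ^ (1 - L)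
              = (4 / ((L - 1) * Real.sqrt (L - 1)) * c0 ^ (1 - L)) * 1 := by ring
            _ ≤ (4 / ((L - 1) * Real.sqrt (L - 1)) * c0 ^ (1 - L)) * ((1 + (j:ℝ)) * S) :=
                mul_le_mul_of_nonneg_left h1jS h0
            _ = _ := by ring
        calc 7 * ((1 + (j:ℝ)) * S) * (2 * (c0 ^ (1 - L) / (L - 1)))
              + 4 / ((L - 1) * Real.sqrt (L - 1)) * c0 ^ (1 - L)
            ≤ 14 / (L - 1) * (1 + (j:ℝ)) * c0 ^ (1 - L) * S
              + 4 / ((L - 1) * Real.sqrt (L - 1)) * (1 + (j:ℝ)) * c0 ^ (1 - L) * S :=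
              add_le_add (le_of_eq e3) hmono
          _ = _ := by ring
    _ = (14 / (L - 1) + 4 / ((L - 1) * Real.sqrt (L - 1))) * (1 + (j:ℝ))
          * (2:ℝ) ^ (-(j:ℝ) * (L - 1) * (1 - a)) * S := by
        have hc0L : c0 ^ (1 - L) = (2:ℝ) ^ (-(j:ℝ) * (L - 1) * (1 - a)) := by
          rw [hc0def, ← Real.rpow_mul (by norm_num : (0:ℝ) ≤ 2)]
          congr 1; ring
        rw [hc0L]
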